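/- arXiv:2301.07384 — 2 statements merged into one kernel-verified Lean document; each statement's English description precedes it below -/
import Mathlib

section
/- If X and Y are independent random variables over (Σ^t)^m such that each of X and Y m-simultaneously ε-fools a class F of functions from Σ^t to {0,1}, then the interleaved random variable X⋈Y = X₁Y₁X₂Y₂⋯X_mY_m 2ε-fools every width-w, length-2tm sliding-window branching program of window size t over Σ = {0,1}. -/
/-- Probability of an event under the uniform distribution on a finite type. -/
noncomputable def unifPr (Ω : Type) [Fintype Ω] (P : Ω → Prop) : ℝ :=
  (Nat.card {ω // P ω} : ℝ) / (Fintype.card Ω)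

/-- Bit strings of length `n`. -/
abbrev Bits (n : ℕ) := Fin n → Bool

/-- Extend a finite bit string to an infinite one (padding with `false`). -/
def extBits {t : ℕ} (x : Bits t) : ℕ → Bool :=
  fun i => if h : i < t then x ⟨i, h⟩ else false

/-- A unanimity program of length `n` with state set `Q`: it has an initial state,
a transition function for each layer, and accepting state sets for each layer;
it accepts iff every state visited (after each of the `n` steps) is accepting. -/
structure UP (Q : Type) (n : ℕ) where
  init : Q
  trans : ℕ → Q → Bool → Q
  acc : ℕ → Q → Prop

namespace UP
variable {Q : Type} {n : ℕ}

/-- The state after reading `i` bits of `x`. -/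
def st (P : UP Q n) (x : ℕ → Bool) : ℕ → Q
  | 0 => P.init
  | i + 1 => P.trans i (st P x i) (x i)

/-- Unanimous acceptance: all states after steps `1, …, n` are accepting. -/
def accepts (P : UP Q n) (x : ℕ → Bool) : Prop :=
  ∀ i, 1 ≤ i → i ≤ n → P.acc i (st P x i)

/-- Running the program from state `q` at layer `i` on a word. -/
def runFrom (P : UP Q n) : ℕ → Q → List Bool → Q
  | _, q, [] => q
  | i, q, b :: bs => runFrom P (i + 1) (P.trans i q b) bs

/-- A state is reachable in layer `i` if some input leads to it. -/
def Reachable (P : UP Q n) (i : ℕ) (q : Q) : Prop :=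
  ∃ x : ℕ → Bool, st P x i = q

/-- Sliding-window property of window size `t`: reading any `t`-bit word from any
two reachable states of layer `i ≤ n - t` leads to the same state. -/
def IsSWBP (P : UP Q n) (t : ℕ) : Prop :=
  ∀ i, i ≤ n - t → ∀ y : List Bool, y.length = t →
    ∀ q q', Reachable P i q → Reachable P i q' →
      runFrom P i q y = runFrom P i q' y

/-- Acceptance of a length-`n` input. -/
def acceptsInput (P : UP Q n) (x : Bits n) : Prop := P.accepts (extBits x)

end UP

/-- Interleaving `x₁y₁x₂y₂⋯x_my_m` of two `m`-tuples of `t`-bit blocks, as an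
infinite bit string (positions beyond `2tm` are `false`). -/
def il {m t : ℕ} (x y : Fin m → Bits t) : ℕ → Bool := fun j =>
  if h : j / t / 2 < m ∧ j % t < t then
    (if (j / t) % 2 = 0 then x ⟨j / t / 2, h.1⟩ ⟨j % t, h.2⟩
     else y ⟨j / t / 2, h.1⟩ ⟨j % t, h.2⟩)
  else false

/-- `X` (a random variable on the finite uniform sample space `Ω`)
`m`-simultaneously `ε`-fools width-`w`, length-`t` unanimity programs. -/
noncomputable def SimulFools (w t m : ℕ) (ε : ℝ) {Ω : Type} [Fintype Ω]
    (X : Ω → Fin m → Bits t) : Prop :=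
  ∀ f : Fin m → UP (Fin w) t,
    |unifPr Ω (fun ω => ∀ i, (f i).acceptsInput (X ω i)) -
      ∏ i : Fin m, unifPr (Bits t) (fun u => (f i).acceptsInput u)| ≤ ε

/-- `X` `m`-simultaneously `ε`-hits width-`w`, length-`t` unanimity programs. -/
noncomputable def SimulHits (w t m : ℕ) (ε : ℝ) {Ω : Type} [Fintype Ω]
    (X : Ω → Fin m → Bits t) : Prop :=
  ∀ f : Fin m → UP (Fin w) t,
    unifPr (Fin m → Bits t) (fun u => ∀ i, (f i).acceptsInput (u i)) ≥ ε →
    ∃ ω, ∀ i, (f i).acceptsInput (X ω i)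

/-- A generator `G` `ε`-fools width-`w`, length-`t` unanimity programs. -/
noncomputable def Fools (w t d : ℕ) (ε : ℝ) (G : Bits d → Bits t) : Prop :=
  ∀ P : UP (Fin w) t,
    |unifPr (Bits d) (fun s => P.acceptsInput (G s)) -
      unifPr (Bits t) (fun u => P.acceptsInput u)| ≤ ε

/-- Statistical distance between (the distributions of) two random variables. -/
noncomputable def SD {Ω₁ Ω₂ V : Type} [Fintype Ω₁] [Fintype Ω₂] [Fintype V]
    (X : Ω₁ → V) (Y : Ω₂ → V) : ℝ :=
  (1 / 2) * ∑ v : V, |unifPr Ω₁ (fun ω => X ω = v) - unifPr Ω₂ (fun ω => Y ω = v)|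

/-- A `(k, ε)`-extractor: for every source of min-entropy at least `k`
(every point has probability at most `2^(-k)`), the output is `ε`-close to uniform. -/
noncomputable def IsExtractor {nn dd mm : ℕ} (k ε : ℝ)
    (Ext : Bits nn → Bits dd → Bits mm) : Prop :=
  ∀ (Ω : Type) [Fintype Ω], ∀ Z : Ω → Bits nn,
    (∀ v, unifPr Ω (fun ω => Z ω = v) ≤ (2 : ℝ) ^ (-k)) →
    SD (fun p : Ω × Bits dd => Ext (Z p.1) p.2) (id : Bits mm → Bits mm) ≤ ε

/-- A standard (ordered read-once) branching program: accepts based only on its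
final state. -/
structure BP (Q : Type) (n : ℕ) where
  init : Q
  trans : ℕ → Q → Bool → Q
  accFinal : Q → Prop

namespace BP
variable {Q : Type} {n : ℕ}

def st (P : BP Q n) (x : ℕ → Bool) : ℕ → Q
  | 0 => P.init
  | i + 1 => P.trans i (st P x i) (x i)

def acceptsInput (P : BP Q n) (x : Bits n) : Prop := P.accFinal (st P (extBits x) n)

def runFrom (P : BP Q n) : ℕ → Q → List Bool → Q
  | _, q, [] => q
  | i, q, b :: bs => runFrom P (i + 1) (P.trans i q b) bs

def Reachable (P : BP Q n) (i : ℕ) (q : Q) : Prop :=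
  ∃ x : ℕ → Bool, st P x i = q

end BP

/-- A probabilistic ACA (PACA): two local transition functions selected by a coin,
with boundary symbols modeled via `Option`, and a set of accepting states. -/
structure PACA (Q : Type) where
  delta : Bool → Option Q → Q → Option Q → Q
  acc : Q → Prop

/-- Neighboring cell content (`none` beyond the boundary). -/
def nbOpt {Q : Type} {n : ℕ} (s : Fin n → Q) (j : ℤ) : Option Q :=
  if h : 0 ≤ j ∧ j < n then some (s ⟨j.toNat, by omega⟩) else none

namespace PACA
variable {Q : Type} {n : ℕ}

/-- One global step with coin tosses `r` (cell `i` uses `δ_{r i}`). -/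
def step (C : PACA Q) (s : Fin n → Q) (r : Fin n → Bool) : Fin n → Q :=
  fun i => C.delta (r i) (nbOpt s ((i : ℤ) - 1)) (s i) (nbOpt s ((i : ℤ) + 1))

/-- The configuration after `k` steps on input `x` with coin matrix `R`. -/
def conf (C : PACA Q) (x : Fin n → Q) (R : ℕ → Fin n → Bool) : ℕ → Fin n → Q
  | 0 => x
  | k + 1 => C.step (conf C x R k) (R k)

/-- All cells are simultaneously accepting. -/
def allAcc (C : PACA Q) (s : Fin n → Q) : Prop := ∀ i, C.acc (s i)

end PACA

/-- Extend a `T × n` coin matrix to all times (all-`false` rows beyond `T`). -/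
def extR {T n : ℕ} (R : Fin T → Fin n → Bool) : ℕ → Fin n → Bool :=
  fun k => if h : k < T then R ⟨k, h⟩ else fun _ => false

/-- Simultaneous hitting for an abstract class `F` of predicates on `V`. -/
noncomputable def SimulHitsF {V : Type} [Fintype V] (F : Set (V → Prop)) (m : ℕ) (ε : ℝ)
    {Ω : Type} [Fintype Ω] (X : Ω → Fin m → V) : Prop :=
  ∀ f : Fin m → V → Prop, (∀ i, f i ∈ F) →
    unifPr (Fin m → V) (fun u => ∀ i, f i (u i)) ≥ ε →
    ∃ ω, ∀ i, f i (X ω i)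


/-! ### Auxiliary machinery -/

section Aux

open scoped Classical

lemma unifPr_eq_sum (Ω : Type) [Fintype Ω] (P : Ω → Prop) :
    unifPr Ω P = (∑ ω : Ω, if P ω then (1:ℝ) else 0) / Fintype.card Ω := by
  rw [unifPr, Nat.card_eq_fintype_card, Fintype.card_subtype, Finset.sum_boole]

lemma unifPr_congr {Ω : Type} [Fintype Ω] {P Q : Ω → Prop} (h : ∀ ω, P ω ↔ Q ω) :
    unifPr Ω P = unifPr Ω Q := by
  simp only [unifPr_eq_sum]
  congr 1
  exact Finset.sum_congr rfl (fun ω _ => by simp [h ω])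

lemma unifPr_nonneg (Ω : Type) [Fintype Ω] (P : Ω → Prop) : 0 ≤ unifPr Ω P := by
  rw [unifPr]; positivity

lemma unifPr_true (Ω : Type) [Fintype Ω] [Nonempty Ω] :
    unifPr Ω (fun _ => True) = 1 := by
  rw [unifPr_eq_sum]
  simp [Fintype.card_pos.ne']

lemma unifPr_prod_right (A B : Type) [Fintype A] [Fintype B] (P : A × B → Prop) :
    unifPr (A × B) P = (∑ b : B, unifPr A (fun a => P (a, b))) / Fintype.card B := by
  simp only [unifPr_eq_sum, Fintype.card_prod, Fintype.sum_prod_type]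
  rw [Finset.sum_comm, Finset.sum_div]
  push_cast
  rw [Finset.sum_div]
  refine Finset.sum_congr rfl (fun b _ => ?_)
  rw [div_div, mul_comm]

lemma unifPr_prod_left (A B : Type) [Fintype A] [Fintype B] (P : A × B → Prop) :
    unifPr (A × B) P = (∑ a : A, unifPr B (fun b => P (a, b))) / Fintype.card A := by
  simp only [unifPr_eq_sum, Fintype.card_prod, Fintype.sum_prod_type]
  rw [Finset.sum_div]
  push_cast
  rw [Finset.sum_div]
  refine Finset.sum_congr rfl (fun a _ => ?_)
  rw [div_div, mul_comm]

lemma unifPr_pi (V : Type) [Fintype V] (m : ℕ) (f : Fin m → V → Prop) :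
    unifPr (Fin m → V) (fun u => ∀ i, f i (u i)) = ∏ i, unifPr V (f i) := by
  simp only [unifPr]
  rw [Nat.card_congr (Equiv.subtypePiEquivPi (p := fun i v => f i v))]
  rw [Nat.card_pi]
  push_cast
  rw [Finset.prod_div_distrib]
  congr 1
  simp [Fintype.card_pi]

lemma avg_le {B : Type} [Fintype B] (f g : B → ℝ) (ε : ℝ) (hε : 0 ≤ ε)
    (h : ∀ b, |f b - g b| ≤ ε) :
    |(∑ b, f b) / (Fintype.card B : ℝ) - (∑ b, g b) / (Fintype.card B : ℝ)| ≤ ε := by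
  rcases Nat.eq_zero_or_pos (Fintype.card B) with h0 | h0
  · simp [h0, hε]
  · rw [div_sub_div_same, abs_div, ← Finset.sum_sub_distrib]
    rw [abs_of_nonneg (by positivity : (0:ℝ) ≤ (Fintype.card B : ℝ))]
    rw [div_le_iff₀ (by positivity)]
    calc |∑ b : B, (f b - g b)| ≤ ∑ b : B, |f b - g b| := Finset.abs_sum_le_sum_abs _ _
      _ ≤ ∑ _b : B, ε := Finset.sum_le_sum (fun b _ => h b)
      _ = ε * Fintype.card B := by simp [mul_comm]

/-! ### State-evolution helpers -/

/-- Evolution of states from state `q` at layer `i0`, reading `z 0, z 1, …`. -/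
def stFrom {Q : Type} (tr : ℕ → Q → Bool → Q) (i0 : ℕ) (q : Q) (z : ℕ → Bool) : ℕ → Q
  | 0 => q
  | k + 1 => tr (i0 + k) (stFrom tr i0 q z k) (z k)

lemma stFrom_congr {Q : Type} (tr : ℕ → Q → Bool → Q) (i0 : ℕ) (q : Q)
    {z z' : ℕ → Bool} (k : ℕ) (h : ∀ j, j < k → z j = z' j) :
    stFrom tr i0 q z k = stFrom tr i0 q z' k := by
  induction k with
  | zero => rfl
  | succ k ih =>
    simp only [stFrom]
    rw [ih (fun j hj => h j (by omega)), h k (by omega)]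

lemma stFrom_succ_left {Q : Type} (tr : ℕ → Q → Bool → Q) (i0 : ℕ) (q : Q)
    (z : ℕ → Bool) (k : ℕ) :
    stFrom tr i0 q z (k + 1) = stFrom tr (i0 + 1) (tr i0 q (z 0)) (fun j => z (j + 1)) k := by
  induction k with
  | zero => rfl
  | succ k ih =>
    show tr (i0 + (k+1)) (stFrom tr i0 q z (k+1)) (z (k+1)) = _
    rw [ih]
    show _ = tr (i0 + 1 + k) (stFrom tr (i0+1) (tr i0 q (z 0)) (fun j => z (j+1)) k) (z (k+1))
    congr 1
    omega

namespace UP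
variable {Q : Type} {n : ℕ}

lemma st_eq_stFrom (P : UP Q n) (z : ℕ → Bool) (k : ℕ) :
    P.st z k = stFrom P.trans 0 P.init z k := by
  induction k with
  | zero => rfl
  | succ k ih => simp only [st, stFrom, ih, Nat.zero_add]

lemma st_add (P : UP Q n) (z : ℕ → Bool) (i0 k : ℕ) :
    P.st z (i0 + k) = stFrom P.trans i0 (P.st z i0) (fun j => z (i0 + j)) k := by
  induction k with
  | zero => rfl
  | succ k ih =>
    show P.trans (i0 + k) (P.st z (i0 + k)) (z (i0 + k)) = _
    rw [ih]; rfl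

lemma runFrom_ofFn (P : UP Q n) (i0 : ℕ) (q : Q) (z : ℕ → Bool) (k : ℕ) :
    P.runFrom i0 q (List.ofFn (fun j : Fin k => z j)) = stFrom P.trans i0 q z k := by
  induction k generalizing i0 q z with
  | zero => rfl
  | succ k ih =>
    rw [List.ofFn_succ, runFrom, stFrom_succ_left]
    exact ih (i0 + 1) (P.trans i0 q (z 0)) (fun j => z (j + 1))

/-- Sliding-window property: the state after a full window depends only on
the window's content. -/
lemma window (P : UP Q n) {t : ℕ} (hS : P.IsSWBP t) {i0 : ℕ} (h : i0 + t ≤ n)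
    (z z' : ℕ → Bool) (hz : ∀ j, j < t → z (i0 + j) = z' (i0 + j)) :
    P.st z (i0 + t) = P.st z' (i0 + t) := by
  rw [st_add, st_add, ← runFrom_ofFn, ← runFrom_ofFn]
  have hl : (List.ofFn (fun j : Fin t => z (i0 + j))) =
      (List.ofFn (fun j : Fin t => z' (i0 + j))) := by
    congr 1
    funext j
    exact hz j j.isLt
  rw [hl]
  exact hS i0 (by omega) _ (by simp) _ _ ⟨z, rfl⟩ ⟨z', rfl⟩

end UP

end Aux

section Core

variable {w t m : ℕ}

lemma stFrom_offset {Q : Type} (tr : ℕ → Q → Bool → Q) (i0 : ℕ) (q : Q) (z : ℕ → Bool)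
    (k : ℕ) : stFrom (fun k' => tr (i0 + k')) 0 q z k = stFrom tr i0 q z k := by
  induction k with
  | zero => rfl
  | succ k ih => simp only [stFrom, ih, Nat.zero_add]

lemma il_apply_x (ht : 0 < t) (x y : Fin m → Bits t) {i k : ℕ} (hi : i < m) (hk : k < t) :
    il x y (2*t*i + k) = x ⟨i, hi⟩ ⟨k, hk⟩ := by
  have h1 : (2*t*i + k)/t = 2*i := by
    rw [show 2*t*i + k = t*(2*i) + k by ring, Nat.mul_add_div ht, Nat.div_eq_of_lt hk,
      Nat.add_zero]
  have h2 : (2*t*i + k) % t = k := by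
    rw [show 2*t*i + k = t*(2*i) + k by ring, Nat.mul_add_mod, Nat.mod_eq_of_lt hk]
  have h3 : 2*i/2 = i := by omega
  simp only [il, h1, h2, h3]
  rw [dif_pos ⟨hi, hk⟩, if_pos (by omega)]

lemma il_apply_y (ht : 0 < t) (x y : Fin m → Bits t) {i k : ℕ} (hi : i < m) (hk : k < t) :
    il x y (2*t*i + t + k) = y ⟨i, hi⟩ ⟨k, hk⟩ := by
  have h1 : (2*t*i + t + k)/t = 2*i + 1 := by
    rw [show 2*t*i + t + k = t*(2*i+1) + k by ring, Nat.mul_add_div ht, Nat.div_eq_of_lt hk,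
      Nat.add_zero]
  have h2 : (2*t*i + t + k) % t = k := by
    rw [show 2*t*i + t + k = t*(2*i+1) + k by ring, Nat.mul_add_mod, Nat.mod_eq_of_lt hk]
  have h3 : (2*i+1)/2 = i := by omega
  simp only [il, h1, h2, h3]
  rw [dif_pos ⟨hi, hk⟩, if_neg (by omega)]

lemma il_apply_ge (ht : 0 < t) (x y : Fin m → Bits t) {j : ℕ} (hj : 2*t*m ≤ j) :
    il x y j = false := by
  have h1 : ¬ (j/t/2 < m) := by
    rw [Nat.div_div_eq_div_mul, not_lt, Nat.le_div_iff_mul_le (by omega)]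
    calc m * (t*2) = 2*t*m := by ring
    _ ≤ j := hj
  simp only [il]
  rw [dif_neg (fun h => h1 h.1)]

lemma il_eq_extBits (ht : 0 < t) (x y : Fin m → Bits t) :
    extBits (fun j : Fin (2*t*m) => il x y j) = il x y := by
  funext j
  by_cases hj : j < 2*t*m
  · simp [extBits, hj]
  · have h := il_apply_ge ht x y (show 2*t*m ≤ j by omega)
    simp [extBits, hj, h]

lemma cover_x (ht : 0 < t) {j : ℕ} (h1 : 1 ≤ j) (h2 : j ≤ 2*t*m) :
    ∃ i k, i < m ∧ 1 ≤ k ∧ k ≤ 2*t ∧ j = 2*t*i + k := by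
  refine ⟨(j-1)/(2*t), (j-1) % (2*t) + 1, ?_, by omega, ?_, ?_⟩
  · rw [Nat.div_lt_iff_lt_mul (by omega)]
    calc j - 1 < 2*t*m := by omega
    _ = m * (2*t) := by ring
  · have := Nat.mod_lt (j-1) (show 0 < 2*t by omega)
    omega
  · have := Nat.div_add_mod (j-1) (2*t)
    omega

lemma cover_y (ht : 0 < t) {j : ℕ} (h1 : t + 1 ≤ j) (h2 : j ≤ 2*t*m) :
    ∃ i k, i < m ∧ 1 ≤ k ∧ k ≤ 2*t ∧ j = 2*t*i + t + k ∧ (t < k → i + 1 < m) := by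
  have hdm : 2*t*((j-t-1)/(2*t)) + (j-t-1) % (2*t) = j-t-1 := Nat.div_add_mod _ _
  have hmod : (j-t-1) % (2*t) < 2*t := Nat.mod_lt _ (by omega)
  refine ⟨(j-t-1)/(2*t), (j-t-1) % (2*t) + 1, ?_, by omega, by omega, by omega, ?_⟩
  · rw [Nat.div_lt_iff_lt_mul (by omega)]
    have : 0 < 2*t*m := by omega
    calc j - t - 1 < 2*t*m := by omega
    _ = m * (2*t) := by ring
  · intro hk
    by_contra hc
    have hm' : m ≤ (j-t-1)/(2*t) + 1 := by omega
    have := Nat.mul_le_mul_left (2*t) hm'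
    have hdist : 2*t*((j-t-1)/(2*t) + 1) = 2*t*((j-t-1)/(2*t)) + 2*t := by ring
    omega

/-- The `x`-side simulating programs, for fixed `y`. -/
def fX (S : UP (Fin w) (2*t*m)) (y : Fin m → Bits t) (i : Fin m) : UP (Fin w) t where
  init := S.st (il (fun _ _ => false) y) (2*t*i)
  trans := fun k q b => S.trans (2*t*i + k) q b
  acc := fun k q => S.acc (2*t*i + k) q ∧
    (k = t → ∀ k', 1 ≤ k' → k' ≤ t →
      S.acc (2*t*i + t + k') (stFrom S.trans (2*t*i + t) q (extBits (y i)) k'))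

/-- The `y`-side simulating programs, for fixed `x`. -/
def fY (S : UP (Fin w) (2*t*m)) (x : Fin m → Bits t) (i : Fin m) : UP (Fin w) t where
  init := S.st (il x (fun _ _ => false)) (2*t*i + t)
  trans := fun k q b => S.trans (2*t*i + t + k) q b
  acc := fun k q =>
    S.acc (2*t*i + t + k) q ∧
    ((i:ℕ) = 0 → ∀ k', 1 ≤ k' → k' ≤ t →
      S.acc k' (S.st (il x (fun _ _ => false)) k')) ∧
    (k = t → ∀ h1 : (i:ℕ)+1 < m, ∀ k', 1 ≤ k' → k' ≤ t →
      S.acc (2*t*i + 2*t + k') (stFrom S.trans (2*t*i + 2*t) q (extBits (x ⟨(i:ℕ)+1, h1⟩)) k'))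

lemma fX_st (S : UP (Fin w) (2*t*m)) (y : Fin m → Bits t) (i : Fin m) (z : ℕ → Bool) (k : ℕ) :
    (fX S y i).st z k = stFrom S.trans (2*t*i) ((fX S y i).init) z k := by
  rw [UP.st_eq_stFrom]
  exact stFrom_offset S.trans (2*t*i) _ z k

lemma fY_st (S : UP (Fin w) (2*t*m)) (x : Fin m → Bits t) (i : Fin m) (z : ℕ → Bool) (k : ℕ) :
    (fY S x i).st z k = stFrom S.trans (2*t*i + t) ((fY S x i).init) z k := by
  rw [UP.st_eq_stFrom]
  exact stFrom_offset S.trans (2*t*i + t) _ z k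

end Core

section Core2

variable {w t m : ℕ} (ht : 0 < t) (hm : 0 < m)
variable (S : UP (Fin w) (2*t*m)) (hS : S.IsSWBP t)
include ht hm hS

lemma st_block_x (x y : Fin m → Bits t) (i : Fin m) :
    S.st (il x y) (2*t*i) = S.st (il (fun _ _ => false) y) (2*t*i) := by
  rcases Nat.eq_zero_or_pos (i : ℕ) with h0 | h0
  · rw [h0, Nat.mul_zero]
    rfl
  · have hle : 2*t*1 ≤ 2*t*(i:ℕ) := Nat.mul_le_mul_left _ h0
    have hle2 : 2*t*(i:ℕ) ≤ 2*t*m := Nat.mul_le_mul_left _ (le_of_lt i.isLt)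
    have h2 : 2*t*(i:ℕ) = (2*t*(i:ℕ) - t) + t := by omega
    rw [h2]
    apply S.window hS (by omega)
    intro j hj
    have hmul : 2*t*(((i:ℕ)-1)+1) = 2*t*((i:ℕ)-1) + 2*t := by ring
    have hieq : ((i:ℕ)-1)+1 = (i:ℕ) := by omega
    have e : 2*t*(i:ℕ) - t + j = 2*t*((i:ℕ)-1) + t + j := by
      rw [hieq] at hmul; omega
    have hi1 : (i:ℕ) - 1 < m := by omega
    rw [e, il_apply_y ht x y hi1 hj, il_apply_y ht _ y hi1 hj]

lemma st_block_x_k (x y : Fin m → Bits t) (i : Fin m) {k : ℕ} (hk : k ≤ t) :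
    S.st (il x y) (2*t*i + k) = (fX S y i).st (extBits (x i)) k := by
  rw [fX_st, S.st_add]
  have h0 : S.st (il x y) (2*t*(i:ℕ)) = (fX S y i).init := st_block_x ht hm S hS x y i
  rw [h0]
  apply stFrom_congr
  intro j hj
  have hjt : j < t := by omega
  rw [il_apply_x ht x y i.isLt hjt]
  simp [extBits, hjt]

lemma st_block_x_tail (x y : Fin m → Bits t) (i : Fin m) {k : ℕ} (hk : k ≤ t) :
    S.st (il x y) (2*t*i + t + k) =
      stFrom S.trans (2*t*i + t) (S.st (il x y) (2*t*i + t)) (extBits (y i)) k := by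
  rw [S.st_add (il x y) (2*t*i + t) k]
  apply stFrom_congr
  intro j hj
  have hjt : j < t := by omega
  rw [il_apply_y ht x y i.isLt hjt]
  simp [extBits, hjt]

lemma fX_accepts_iff (x y : Fin m → Bits t) (i : Fin m) :
    (fX S y i).acceptsInput (x i) ↔
      ∀ k, 1 ≤ k → k ≤ 2*t → S.acc (2*t*i + k) (S.st (il x y) (2*t*i + k)) := by
  have hq : ∀ k, k ≤ t → (fX S y i).st (extBits (x i)) k = S.st (il x y) (2*t*i + k) :=
    fun k hk => (st_block_x_k ht hm S hS x y i hk).symm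
  constructor
  · intro h k hk1 hk2
    by_cases hkt : k ≤ t
    · have := (h k hk1 hkt).1
      rwa [hq k hkt] at this
    · have htail := (h t (by omega) le_rfl).2 rfl (k - t) (by omega) (by omega)
      rw [hq t le_rfl] at htail
      rw [← st_block_x_tail ht hm S hS x y i (show k - t ≤ t by omega)] at htail
      have : 2*t*(i:ℕ) + t + (k - t) = 2*t*(i:ℕ) + k := by omega
      rwa [this] at htail
  · intro h k hk1 hkt
    constructor
    · rw [hq k hkt]
      exact h k hk1 (by omega)
    · intro hkeq k' h1 h2
      rw [hq k hkt, hkeq, ← st_block_x_tail ht hm S hS x y i h2]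
      have : 2*t*(i:ℕ) + t + k' = 2*t*(i:ℕ) + (t + k') := by omega
      rw [this]
      exact h (t + k') (by omega) (by omega)

lemma E1 (x y : Fin m → Bits t) :
    (∀ i, (fX S y i).acceptsInput (x i)) ↔ S.accepts (il x y) := by
  constructor
  · intro h j hj1 hj2
    obtain ⟨i, k, hi, hk1, hk2, rfl⟩ := cover_x ht hj1 hj2
    exact (fX_accepts_iff ht hm S hS x y ⟨i, hi⟩).1 (h ⟨i, hi⟩) k hk1 hk2
  · intro h i
    rw [fX_accepts_iff ht hm S hS x y i]
    intro k hk1 hk2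
    have hle : 2*t*((i:ℕ)+1) ≤ 2*t*m := Nat.mul_le_mul_left _ i.isLt
    have hd : 2*t*((i:ℕ)+1) = 2*t*(i:ℕ) + 2*t := by ring
    exact h (2*t*(i:ℕ) + k) (by omega) (by omega)

lemma st_block_y (x y : Fin m → Bits t) (i : Fin m) :
    S.st (il x y) (2*t*i + t) = S.st (il x (fun _ _ => false)) (2*t*i + t) := by
  have hle : 2*t*((i:ℕ)+1) ≤ 2*t*m := Nat.mul_le_mul_left _ i.isLt
  have hd : 2*t*((i:ℕ)+1) = 2*t*(i:ℕ) + 2*t := by ring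
  apply S.window hS (by omega)
  intro j hj
  rw [il_apply_x ht x y i.isLt hj, il_apply_x ht x _ i.isLt hj]

lemma st_head (x y : Fin m → Bits t) {k : ℕ} (hk : k ≤ t) :
    S.st (il x y) k = S.st (il x (fun _ _ => false)) k := by
  rw [UP.st_eq_stFrom, UP.st_eq_stFrom]
  apply stFrom_congr
  intro j hj
  have hjt : j < t := by omega
  have e : j = 2*t*0 + j := by omega
  rw [e, il_apply_x ht x y hm hjt, il_apply_x ht x _ hm hjt]

lemma st_block_y_k (x y : Fin m → Bits t) (i : Fin m) {k : ℕ} (hk : k ≤ t) :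
    S.st (il x y) (2*t*i + t + k) = (fY S x i).st (extBits (y i)) k := by
  rw [fY_st, S.st_add]
  have h0 : S.st (il x y) (2*t*(i:ℕ) + t) = (fY S x i).init := st_block_y ht hm S hS x y i
  rw [h0]
  apply stFrom_congr
  intro j hj
  have hjt : j < t := by omega
  rw [il_apply_y ht x y i.isLt hjt]
  simp [extBits, hjt]

lemma st_block_y_tail (x y : Fin m → Bits t) (i : Fin m) (h1 : (i:ℕ)+1 < m) {k : ℕ}
    (hk : k ≤ t) :
    S.st (il x y) (2*t*i + 2*t + k) =
      stFrom S.trans (2*t*i + 2*t) (S.st (il x y) (2*t*i + 2*t)) (extBits (x ⟨(i:ℕ)+1, h1⟩)) k := by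
  rw [S.st_add (il x y) (2*t*i + 2*t) k]
  apply stFrom_congr
  intro j hj
  have hjt : j < t := by omega
  have e : 2*t*(i:ℕ) + 2*t + j = 2*t*((i:ℕ)+1) + j := by ring
  rw [e, il_apply_x ht x y h1 hjt]
  simp [extBits, hjt]

lemma fY_accepts_iff (x y : Fin m → Bits t) (i : Fin m) :
    (fY S x i).acceptsInput (y i) ↔
      (((i:ℕ) = 0 → ∀ k, 1 ≤ k → k ≤ t → S.acc k (S.st (il x y) k)) ∧
       (∀ k, 1 ≤ k → k ≤ t → S.acc (2*t*i + t + k) (S.st (il x y) (2*t*i + t + k))) ∧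
       (∀ _h1 : (i:ℕ)+1 < m, ∀ k, 1 ≤ k → k ≤ t →
          S.acc (2*t*i + 2*t + k) (S.st (il x y) (2*t*i + 2*t + k)))) := by
  have hq : ∀ k, k ≤ t → (fY S x i).st (extBits (y i)) k = S.st (il x y) (2*t*i + t + k) :=
    fun k hk => (st_block_y_k ht hm S hS x y i hk).symm
  have hhead : ∀ k, k ≤ t → S.st (il x (fun _ _ => false)) k = S.st (il x y) k :=
    fun k hk => (st_head ht hm S hS x y hk).symm
  constructor
  · intro h
    refine ⟨?_, ?_, ?_⟩
    · intro hi0 k hk1 hk2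
      have := ((h t (by omega) le_rfl).2).1 hi0 k hk1 hk2
      rwa [hhead k hk2] at this
    · intro k hk1 hk2
      have := (h k hk1 hk2).1
      rwa [hq k hk2] at this
    · intro h1 k hk1 hk2
      have htail := ((h t (by omega) le_rfl).2).2 rfl h1 k hk1 hk2
      rw [hq t le_rfl] at htail
      have e : 2*t*(i:ℕ) + t + t = 2*t*(i:ℕ) + 2*t := by omega
      rw [e] at htail
      rwa [← st_block_y_tail ht hm S hS x y i h1 hk2] at htail
  · intro h k hk1 hk2
    refine ⟨?_, ?_, ?_⟩
    · rw [hq k hk2]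
      exact h.2.1 k hk1 hk2
    · intro hi0 k' h1' h2'
      rw [hhead k' h2']
      exact h.1 hi0 k' h1' h2'
    · intro hkeq h1 k' h1' h2'
      rw [hq k hk2, hkeq]
      have e : 2*t*(i:ℕ) + t + t = 2*t*(i:ℕ) + 2*t := by omega
      rw [e, ← st_block_y_tail ht hm S hS x y i h1 h2']
      exact h.2.2 h1 k' h1' h2'

lemma E2 (x y : Fin m → Bits t) :
    (∀ i, (fY S x i).acceptsInput (y i)) ↔ S.accepts (il x y) := by
  constructor
  · intro h j hj1 hj2
    by_cases hjt : j ≤ t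
    · exact ((fY_accepts_iff ht hm S hS x y ⟨0, hm⟩).1 (h ⟨0, hm⟩)).1 rfl j hj1 hjt
    · obtain ⟨i, k, hi, hk1, hk2, rfl, hlast⟩ := cover_y ht (by omega) hj2
      by_cases hkt : k ≤ t
      · exact ((fY_accepts_iff ht hm S hS x y ⟨i, hi⟩).1 (h ⟨i, hi⟩)).2.1 k hk1 hkt
      · have h1 : i + 1 < m := hlast (by omega)
        have e : 2*t*i + t + k = 2*t*i + 2*t + (k - t) := by omega
        rw [e]
        exact ((fY_accepts_iff ht hm S hS x y ⟨i, hi⟩).1 (h ⟨i, hi⟩)).2.2 h1 (k - t)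
          (by omega) (by omega)
  · intro h i
    rw [fY_accepts_iff ht hm S hS x y i]
    have hle : 2*t*((i:ℕ)+1) ≤ 2*t*m := Nat.mul_le_mul_left _ i.isLt
    have hd : 2*t*((i:ℕ)+1) = 2*t*(i:ℕ) + 2*t := by ring
    have hm1 : 2*t*1 ≤ 2*t*m := Nat.mul_le_mul_left _ hm
    refine ⟨?_, ?_, ?_⟩
    · intro _ k hk1 hk2
      exact h k hk1 (by omega)
    · intro k hk1 hk2
      exact h (2*t*(i:ℕ) + t + k) (by omega) (by omega)
    · intro h1 k hk1 hk2
      have hle2 : 2*t*((i:ℕ)+2) ≤ 2*t*m := Nat.mul_le_mul_left _ h1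
      have hd2 : 2*t*((i:ℕ)+2) = 2*t*(i:ℕ) + 2*t + 2*t := by ring
      exact h (2*t*(i:ℕ) + 2*t + k) (by omega) (by omega)

end Core2

section Final

lemma unifPr_card_zero {Ω : Type} [Fintype Ω] (h : Fintype.card Ω = 0) (P : Ω → Prop) :
    unifPr Ω P = 0 := by
  rw [unifPr, h]
  simp

lemma unifPr_comap {A B : Type} [Fintype A] [Fintype B] (e : A ≃ B) (P : B → Prop) :
    unifPr A (fun a => P (e a)) = unifPr B P := by
  rw [unifPr, unifPr, Nat.card_congr (e.subtypeEquiv (fun _ => Iff.rfl)),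
    Fintype.card_congr e]

/-- A trivial always-accepting unanimity program. -/
def trivUP {w t : ℕ} (q0 : Fin w) : UP (Fin w) t :=
  ⟨q0, fun _ q _ => q, fun _ _ => True⟩

lemma trivUP_accepts {w t : ℕ} (q0 : Fin w) (u : Bits t) :
    (trivUP q0).acceptsInput u := fun _ _ _ => trivial

lemma prod_trivUP_one {w t m : ℕ} (q0 : Fin w) :
    (∏ _i : Fin m, unifPr (Bits t) fun u => (trivUP (t := t) q0).acceptsInput u) = 1 := by
  apply Finset.prod_eq_one
  intro i _
  rw [unifPr_congr (fun u => iff_true_intro (trivUP_accepts q0 u)), unifPr_true]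

lemma step3 {w t m : ℕ} (ht : 0 < t) (S : UP (Fin w) (2*t*m)) :
    unifPr ((Fin m → Bits t) × (Fin m → Bits t)) (fun p => S.accepts (il p.1 p.2)) =
      unifPr (Bits (2*t*m)) (fun u => S.acceptsInput u) := by
  have hbij : Function.Bijective (fun p : (Fin m → Bits t) × (Fin m → Bits t) =>
      (fun j : Fin (2*t*m) => il p.1 p.2 j : Bits (2*t*m))) := by
    rw [Fintype.bijective_iff_injective_and_card]
    constructor
    · intro p p' hpp
      have hx : p.1 = p'.1 := by
        funext i k
        have hle : 2*t*((i:ℕ)+1) ≤ 2*t*m := Nat.mul_le_mul_left _ i.isLt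
        have hd : 2*t*((i:ℕ)+1) = 2*t*(i:ℕ) + 2*t := by ring
        have hlt : 2*t*(i:ℕ) + (k:ℕ) < 2*t*m := by omega
        have h := congrFun hpp ⟨2*t*(i:ℕ) + (k:ℕ), hlt⟩
        simp only at h
        rw [il_apply_x ht p.1 p.2 i.isLt k.isLt, il_apply_x ht p'.1 p'.2 i.isLt k.isLt] at h
        simpa using h
      have hy : p.2 = p'.2 := by
        funext i k
        have hle : 2*t*((i:ℕ)+1) ≤ 2*t*m := Nat.mul_le_mul_left _ i.isLt
        have hd : 2*t*((i:ℕ)+1) = 2*t*(i:ℕ) + 2*t := by ring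
        have hlt : 2*t*(i:ℕ) + t + (k:ℕ) < 2*t*m := by omega
        have h := congrFun hpp ⟨2*t*(i:ℕ) + t + (k:ℕ), hlt⟩
        simp only at h
        rw [il_apply_y ht p.1 p.2 i.isLt k.isLt, il_apply_y ht p'.1 p'.2 i.isLt k.isLt] at h
        simpa using h
      exact Prod.ext hx hy
    · simp only [Fintype.card_prod, Fintype.card_fun, Fintype.card_bool, Fintype.card_fin]
      rw [show ((2:ℕ)^t)^m = 2^(t*m) from (pow_mul 2 t m).symm, ← pow_add]
      congr 1
      ring
  calc unifPr ((Fin m → Bits t) × (Fin m → Bits t)) (fun p => S.accepts (il p.1 p.2))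
      = unifPr ((Fin m → Bits t) × (Fin m → Bits t))
          (fun p => S.acceptsInput (fun j : Fin (2*t*m) => il p.1 p.2 j)) := by
        apply unifPr_congr
        intro p
        show S.accepts (il p.1 p.2) ↔ S.accepts (extBits fun j : Fin (2*t*m) => il p.1 p.2 j)
        rw [il_eq_extBits ht p.1 p.2]
    _ = unifPr (Bits (2*t*m)) (fun u => S.acceptsInput u) :=
        unifPr_comap (Equiv.ofBijective _ hbij) _

theorem interleave_fools_swbp' {w t m : ℕ} {ε : ℝ}
    {Ω₁ Ω₂ : Type} [Fintype Ω₁] [Fintype Ω₂]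
    (X : Ω₁ → Fin m → Bits t) (Y : Ω₂ → Fin m → Bits t)
    (hX : SimulFools w t m ε X) (hY : SimulFools w t m ε Y)
    (S : UP (Fin w) (2 * t * m)) (hS : S.IsSWBP t) :
    |unifPr (Ω₁ × Ω₂) (fun ω => S.accepts (il (X ω.1) (Y ω.2))) -
      unifPr (Bits (2 * t * m)) (fun u => S.acceptsInput u)| ≤ 2 * ε := by
  have hε : 0 ≤ ε := le_trans (abs_nonneg _) (hX (fun _ => trivUP S.init))
  by_cases hdeg : t = 0 ∨ m = 0
  · -- degenerate case: length 0
    have hN0 : 2*t*m = 0 := by rcases hdeg with h | h <;> simp [h]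
    have hacc : ∀ z : ℕ → Bool, S.accepts z := by
      intro z i h1 h2
      exfalso
      omega
    rw [unifPr_congr (fun ω => iff_true_intro (hacc _)),
        unifPr_congr (fun u => iff_true_intro (show S.acceptsInput u from hacc (extBits u)))]
    rcases isEmpty_or_nonempty (Ω₁ × Ω₂) with he | hne
    · rw [unifPr_card_zero Fintype.card_eq_zero, unifPr_true]
      have h1ε : 1 ≤ ε := by
        rcases isEmpty_prod.mp he with hA | hB
        · have h := hX (fun _ => trivUP S.init)
          rw [unifPr_card_zero Fintype.card_eq_zero, prod_trivUP_one] at h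
          simpa using h
        · have h := hY (fun _ => trivUP S.init)
          rw [unifPr_card_zero Fintype.card_eq_zero, prod_trivUP_one] at h
          simpa using h
      rw [zero_sub, abs_neg, abs_one]
      linarith
    · rw [unifPr_true, unifPr_true]
      simp only [sub_self, abs_zero]
      positivity
  · push_neg at hdeg
    have ht : 0 < t := Nat.pos_of_ne_zero hdeg.1
    have hm : 0 < m := Nat.pos_of_ne_zero hdeg.2
    set M := unifPr ((Fin m → Bits t) × Ω₂) (fun p => S.accepts (il p.1 (Y p.2))) with hM
    have step1 : |unifPr (Ω₁ × Ω₂) (fun ω => S.accepts (il (X ω.1) (Y ω.2))) - M| ≤ ε := by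
      rw [hM, unifPr_prod_right, unifPr_prod_right]
      apply avg_le _ _ ε hε
      intro ω₂
      have h := hX (fX S (Y ω₂))
      rw [unifPr_congr (fun ω₁ => E1 ht hm S hS (X ω₁) (Y ω₂)), ← unifPr_pi] at h
      rwa [unifPr_congr (fun u => E1 ht hm S hS u (Y ω₂))] at h
    have step2 : |M - unifPr ((Fin m → Bits t) × (Fin m → Bits t))
        (fun p => S.accepts (il p.1 p.2))| ≤ ε := by
      rw [hM, unifPr_prod_left, unifPr_prod_left]
      apply avg_le _ _ ε hε
      intro x
      have h := hY (fY S x)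
      rw [unifPr_congr (fun ω₂ => E2 ht hm S hS x (Y ω₂)), ← unifPr_pi] at h
      rwa [unifPr_congr (fun v => E2 ht hm S hS x v)] at h
    rw [← step3 ht S]
    calc |unifPr (Ω₁ × Ω₂) (fun ω => S.accepts (il (X ω.1) (Y ω.2))) -
        unifPr ((Fin m → Bits t) × (Fin m → Bits t)) (fun p => S.accepts (il p.1 p.2))|
        ≤ |unifPr (Ω₁ × Ω₂) (fun ω => S.accepts (il (X ω.1) (Y ω.2))) - M| +
          |M - unifPr ((Fin m → Bits t) × (Fin m → Bits t))
            (fun p => S.accepts (il p.1 p.2))| := abs_sub_le _ _ _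
      _ ≤ 2 * ε := by linarith

end Final
/-- If independent `X` and `Y` each `m`-simultaneously `ε`-fool
width-`w`, length-`t` unanimity programs, then `X ⋈ Y` `2ε`-fools every
width-`w`, length-`2tm` SWBP of window size `t`. -/
theorem interleave_fools_swbp {w t m : ℕ} {ε : ℝ}
    {Ω₁ Ω₂ : Type} [Fintype Ω₁] [Fintype Ω₂]
    (X : Ω₁ → Fin m → Bits t) (Y : Ω₂ → Fin m → Bits t)
    (hX : SimulFools w t m ε X) (hY : SimulFools w t m ε Y)
    (S : UP (Fin w) (2 * t * m)) (hS : S.IsSWBP t) :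
    |unifPr (Ω₁ × Ω₂) (fun ω => S.accepts (il (X ω.1) (Y ω.2))) -
      unifPr (Bits (2 * t * m)) (fun u => S.acceptsInput u)| ≤ 2 * ε := by
  exact interleave_fools_swbp' X Y hX hY S hS
end

section
/- Key decomposition: let S be a width-w, length-2tm SWBP of window size t and fix x = (x₁,…,x_m) ∈ ({0,1}^t)^m. Then there exist width-w, length-t unanimity programs S_x^1,…,S_x^m such that for every y = (y₁,…,y_m) ∈ ({0,1}^t)^m, S accepts x ⋈ y if and only if S_x^i accepts y_i for every i ∈ [m]. -/
section SWBPaux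

namespace UP
variable {Q : Type} {n : ℕ}

lemma st_congr' (P : UP Q n) (c c' : ℕ → Bool) :
    ∀ a, (∀ j, j < a → c j = c' j) → P.st c a = P.st c' a
  | 0, _ => rfl
  | a+1, h => by
    simp only [UP.st, st_congr' P c c' a (fun j hj => h j (by omega)), h a (by omega)]

lemma st_add' (P : UP Q n) (c : ℕ → Bool) :
    ∀ (l a : ℕ), P.st c (a + l) = P.runFrom a (P.st c a) ((List.range' a l).map c)
  | 0, a => by simp [UP.runFrom]
  | l+1, a => by
    rw [show a + (l+1) = (a+1) + l by omega, st_add' P c l (a+1)]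
    simp [List.range'_succ, UP.runFrom, UP.st]

end UP

lemma il_odd_val {m t : ℕ} (x y : Fin m → Bits t) (i : Fin m) (k : ℕ) (hk : k < t) :
    il x y ((2*(i:ℕ)+1)*t + k) = y i ⟨k, hk⟩ := by
  have ht : 0 < t := by omega
  have e : (2*(i:ℕ)+1)*t + k = t*(2*(i:ℕ)+1) + k := by ring
  have h1 : ((2*(i:ℕ)+1)*t + k) / t = 2*(i:ℕ)+1 := by
    rw [e, Nat.mul_add_div ht, Nat.div_eq_of_lt hk]
  have h2 : ((2*(i:ℕ)+1)*t + k) % t = k := by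
    rw [e, Nat.mul_add_mod, Nat.mod_eq_of_lt hk]
  unfold il
  rw [dif_pos (by rw [h1, h2]; constructor <;> [omega; exact hk]),
      if_neg (by rw [h1]; omega)]
  congr 1 <;> [skip; · apply Fin.ext; simp [h2]]
  apply Fin.ext; simp [h1]; omega

lemma il_even {m t : ℕ} (x y y' : Fin m → Bits t) (j : ℕ) (h : (j/t) % 2 = 0) :
    il x y j = il x y' j := by
  unfold il
  split_ifs <;> simp_all

lemma word_eq {m t : ℕ} (x y y' : Fin m → Bits t) (ht : 0 < t) (i l : ℕ) (hl : l ≤ t) :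
    (List.range' (2*i*t) l).map (il x y) = (List.range' (2*i*t) l).map (il x y') := by
  apply List.map_congr_left
  intro j hj
  rw [List.mem_range'_1] at hj
  apply il_even
  have hc : t*(2*i) = 2*i*t := by ring
  have e : j = t*(2*i) + (j - 2*i*t) := by omega
  have hr : j - 2*i*t < t := by omega
  rw [e, Nat.mul_add_div ht, Nat.div_eq_of_lt hr]
  omega

lemma mul_bound {t m a l : ℕ} (ha : a + 1 ≤ 2*m) (hl : l ≤ t) : a*t + l ≤ 2*t*m := by
  calc a*t + l ≤ a*t + t := by omega
    _ = (a+1)*t := by ring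
    _ ≤ (2*m)*t := Nat.mul_le_mul_right t ha
    _ = 2*t*m := by ring

variable {w t m : ℕ}

/-- The fixed-`x` programs. -/
def SxProg (S : UP (Fin w) (2*t*m)) (x : Fin m → Bits t) (i : Fin m) : UP (Fin w) t where
  init := S.st (il x (fun _ _ => false)) ((2*(i:ℕ)+1)*t)
  trans := fun k q b => S.trans ((2*(i:ℕ)+1)*t + k) q b
  acc := fun k q =>
    S.acc ((2*(i:ℕ)+1)*t + k) q ∧
    (k = t →
      (((i:ℕ) = 0 → ∀ l, 1 ≤ l → l ≤ t →
          S.acc l (S.st (il x (fun _ _ => false)) l)) ∧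
       ((i:ℕ)+1 < m → ∀ l, 1 ≤ l → l ≤ t →
          S.acc (2*((i:ℕ)+1)*t + l)
            (S.runFrom (2*((i:ℕ)+1)*t) q
              ((List.range' (2*((i:ℕ)+1)*t) l).map (il x (fun _ _ => false)))))))

lemma SxProg_acc (S : UP (Fin w) (2*t*m)) (x : Fin m → Bits t) (i : Fin m) (k : ℕ) (q : Fin w) :
    (SxProg S x i).acc k q ↔
      (S.acc ((2*(i:ℕ)+1)*t + k) q ∧
       (k = t →
         (((i:ℕ) = 0 → ∀ l, 1 ≤ l → l ≤ t →
             S.acc l (S.st (il x (fun _ _ => false)) l)) ∧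
          ((i:ℕ)+1 < m → ∀ l, 1 ≤ l → l ≤ t →
             S.acc (2*((i:ℕ)+1)*t + l)
               (S.runFrom (2*((i:ℕ)+1)*t) q
                 ((List.range' (2*((i:ℕ)+1)*t) l).map (il x (fun _ _ => false)))))))) :=
  Iff.rfl

section facts
variable (S : UP (Fin w) (2*t*m)) (x : Fin m → Bits t) (y : Fin m → Bits t)

/-- States in the initial `x`-block do not depend on `y`. -/
lemma st_prefix (a : ℕ) (ha : a ≤ t) :
    S.st (il x y) a = S.st (il x (fun _ _ => false)) a := by
  apply UP.st_congr'
  intro j hj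
  apply il_even
  rw [Nat.div_eq_of_lt (by omega)]

/-- `x`-block runs: the state after reading `l` bits of `x`-block `i` is obtained by
running the canonical word from the block-start state. -/
lemma st_x (ht : 0 < t) (i l : ℕ) (hl : l ≤ t) :
    S.st (il x y) (2*i*t + l) =
      S.runFrom (2*i*t) (S.st (il x y) (2*i*t))
        ((List.range' (2*i*t) l).map (il x (fun _ _ => false))) := by
  rw [UP.st_add', word_eq x y _ ht i l hl]

/-- The state at the start of `y`-block `i` does not depend on `y`. -/
lemma st_block_start (hS : S.IsSWBP t) (ht : 0 < t) (i : Fin m) :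
    S.st (il x y) ((2*(i:ℕ)+1)*t) = S.st (il x (fun _ _ => false)) ((2*(i:ℕ)+1)*t) := by
  have e : (2*(i:ℕ)+1)*t = 2*(i:ℕ)*t + t := by ring
  rw [e, UP.st_add', UP.st_add', word_eq x y (fun _ _ => false) ht (i:ℕ) t le_rfl]
  apply hS
  · exact Nat.le_sub_of_add_le (mul_bound (by have := i.isLt; omega) le_rfl)
  · simp
  · exact ⟨_, rfl⟩
  · exact ⟨_, rfl⟩

/-- The states through `y`-block `i` are computed by `SxProg`. -/
lemma st_y (hS : S.IsSWBP t) (ht : 0 < t) (i : Fin m) :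
    ∀ k, k ≤ t →
      (SxProg S x i).st (extBits (y i)) k = S.st (il x y) ((2*(i:ℕ)+1)*t + k)
  | 0, _ => by
    simp only [UP.st, Nat.add_zero]
    exact (st_block_start S x y hS ht i).symm
  | k+1, hk => by
    have ih := st_y hS ht i k (by omega)
    have e : (2*(i:ℕ)+1)*t + (k+1) = ((2*(i:ℕ)+1)*t + k) + 1 := by omega
    rw [e]
    simp only [UP.st, SxProg, ih]
    congr 1
    rw [il_odd_val x y i k (by omega)]
    simp [extBits, Nat.lt_of_succ_le hk]

end facts
end SWBPaux


/-- key decomposition: fixing the `x`-blocks of a width-`w`,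
length-`2tm` SWBP of window size `t` yields `m` width-`w`, length-`t`
unanimity programs `S_x^i` with `S(x ⋈ y) = 1 ↔ ∀ i, S_x^i(y_i) = 1`. -/
theorem swbp_decomposition {w t m : ℕ} (S : UP (Fin w) (2 * t * m))
    (hS : S.IsSWBP t) (x : Fin m → Bits t) :
    ∃ Sx : Fin m → UP (Fin w) t,
      ∀ y : Fin m → Bits t,
        (S.accepts (il x y) ↔ ∀ i, (Sx i).acceptsInput (y i)) := by
  refine ⟨SxProg S x, fun y => ?_⟩
  by_cases h0 : t = 0 ∨ m = 0
  · have hn : 2*t*m = 0 := by rcases h0 with h|h <;> simp [h]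
    constructor
    · intro _ i k hk1 hk2
      rcases h0 with h|h
      · omega
      · exact absurd i.isLt (by omega)
    · intro _ j hj1 hj2
      omega
  · push_neg at h0
    have ht : 0 < t := Nat.pos_of_ne_zero h0.1
    have hm : 0 < m := Nat.pos_of_ne_zero h0.2
    constructor
    · -- forward
      intro H i k hk1 hk2
      rw [st_y S x y hS ht i k hk2, SxProg_acc]
      refine ⟨H _ (hk1.trans (Nat.le_add_left k _))
          (mul_bound (by have := i.isLt; omega) hk2), ?_⟩
      intro hkk
      rw [hkk]
      constructor
      · intro _ l hl1 hl2
        rw [← st_prefix S x y l hl2]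
        refine H l hl1 ?_
        have h := mul_bound (t := t) (m := m) (a := 0) (l := l) (by omega) hl2
        simpa using h
      · intro him l hl1 hl2
        have e1 : (2*(i:ℕ)+1)*t + t = 2*((i:ℕ)+1)*t := by ring
        rw [e1, ← st_x S x y ht ((i:ℕ)+1) l hl2]
        exact H _ (hl1.trans (Nat.le_add_left l _)) (mul_bound (by omega) hl2)
    · -- backward
      intro H j hj1 hj2
      obtain ⟨b, k, hk1, hkt, hj⟩ : ∃ b k, 1 ≤ k ∧ k ≤ t ∧ j = b*t + k := by
        refine ⟨(j-1)/t, (j-1)%t + 1, by omega, ?_, ?_⟩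
        · have := Nat.mod_lt (j-1) ht; omega
        · have h1 := Nat.div_add_mod (j-1) t
          have h2 : ((j-1)/t)*t = t*((j-1)/t) := Nat.mul_comm _ _
          omega
      have hbm : b < 2*m := by
        rcases Nat.lt_or_ge b (2*m) with h|h
        · exact h
        · exfalso
          have h1 : 2*m*t ≤ b*t := Nat.mul_le_mul_right t h
          have h2 : 2*m*t = 2*t*m := by ring
          omega
      rcases Nat.even_or_odd b with hb | hb
      · obtain ⟨c, hc⟩ := hb
        have hcm : c < m := by omega
        rcases Nat.eq_zero_or_pos c with hc0 | hc1
        · -- first x-block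
          have hb0 : b = 0 := by omega
          have hjk : j = k := by
            have hbt : b*t = 0 := by rw [hb0, Nat.zero_mul]
            omega
          have hA := H ⟨0, hm⟩ t (by omega) le_rfl
          rw [SxProg_acc] at hA
          obtain ⟨-, h2⟩ := hA
          obtain ⟨hC, -⟩ := h2 rfl
          have hacc := hC rfl k hk1 (by omega)
          rw [← st_prefix S x y k (by omega)] at hacc
          rw [hjk]
          exact hacc
        · -- later x-block
          set i' : Fin m := ⟨c-1, by omega⟩ with hi'
          have hA := H i' t (by omega) le_rfl
          rw [SxProg_acc] at hA
          obtain ⟨-, h2⟩ := hA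
          obtain ⟨-, hB⟩ := h2 rfl
          have hv : (i' : ℕ) = c - 1 := rfl
          have hacc := hB (by rw [hv]; omega) k hk1 hkt
          rw [st_y S x y hS ht i' t le_rfl] at hacc
          have e1 : (2*(i':ℕ)+1)*t + t = 2*((i':ℕ)+1)*t := by ring
          rw [e1, ← st_x S x y ht ((i':ℕ)+1) k hkt] at hacc
          have e2 : 2*((i':ℕ)+1)*t + k = j := by
            rw [hv, show c-1+1 = c from by omega, hj, hc]; ring
          rw [e2] at hacc
          exact hacc
      · -- y-block
        obtain ⟨c, hc⟩ := hb
        have hcm : c < m := by omega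
        have hA := H ⟨c, hcm⟩ k hk1 hkt
        rw [SxProg_acc] at hA
        obtain ⟨h1, -⟩ := hA
        rw [st_y S x y hS ht ⟨c, hcm⟩ k hkt] at h1
        have hv : ((⟨c, hcm⟩ : Fin m) : ℕ) = c := rfl
        have e : (2*((⟨c, hcm⟩ : Fin m):ℕ)+1)*t + k = j := by
          rw [hv, hj, hc]
        rw [e] at h1
        exact h1
end
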